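/- Define the bilinear-in-(u,v) operator A_{12}[u,v]h with Fourier coefficients (A_{12}[u,v]h)_k = Σ_{j≠0, |j|≠|k|} u_j v_{-j} (|j|^2/(8(|j|-|k|))) h_k for k ∈ Z^d \ {0}. Then for all s ≥ 0 and m_0 = 3/2 (dimension d ≥ 2): ||A_{12}[u,v]h||_s ≤ (3/8)·||u||_{m_0}·||v||_{m_0}·||h||_s, where ||·||_s is the zero-mean Sobolev norm ||u||_s^2 = Σ_{j≠0}|u_j|^2|j|^{2s}. -/
import Mathlib

open scoped Classical
set_option maxHeartbeats 1000000

/-- Euclidean norm of an integer vector (a Fourier mode on the torus). -/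
noncomputable def inorm {d : ℕ} (j : Fin d → ℤ) : ℝ :=
  Real.sqrt (∑ i, ((j i : ℝ)) ^ 2)

/-- Sobolev `H^s` norm via Fourier coefficients. -/
noncomputable def sobNorm {d : ℕ} (s : ℝ) (u : (Fin d → ℤ) → ℂ) : ℝ :=
  Real.sqrt (∑' j, ‖u j‖ ^ 2 * inorm j ^ (2 * s))

/-- Coefficient `a₁₂(j,k) = |j|² / (8(|j| − |k|))` for `|j| ≠ |k|`, `0` otherwise. -/
noncomputable def a12 {d : ℕ} (j k : Fin d → ℤ) : ℝ :=
  if inorm j = inorm k then 0 else inorm j ^ 2 / (8 * (inorm j - inorm k))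

lemma inorm_nonneg {d : ℕ} (j : Fin d → ℤ) : 0 ≤ inorm j := Real.sqrt_nonneg _

lemma inorm_neg {d : ℕ} (j : Fin d → ℤ) : inorm (-j) = inorm j := by
  unfold inorm
  congr 1
  refine Finset.sum_congr rfl fun i _ => ?_
  push_cast [Pi.neg_apply]
  ring

lemma inorm_sq {d : ℕ} (j : Fin d → ℤ) :
    inorm j ^ 2 = ((∑ i, (j i) ^ 2 : ℤ) : ℝ) := by
  unfold inorm
  rw [Real.sq_sqrt (by positivity)]
  push_cast
  rfl

lemma a12_abs_le {d : ℕ} (j k : Fin d → ℤ) : |a12 j k| ≤ 3 / 8 * inorm j ^ 3 := by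
  unfold a12
  split_ifs with hab
  · simp only [abs_zero]
    have := pow_nonneg (inorm_nonneg j) 3
    linarith
  set a := inorm j with ha'
  set b := inorm k with hb'
  have ha : 0 ≤ a := inorm_nonneg j
  have hb : 0 ≤ b := inorm_nonneg k
  -- |a² - b²| ≥ 1 since both squares are distinct integers
  have hsqne : (∑ i, (j i) ^ 2 : ℤ) ≠ (∑ i, (k i) ^ 2 : ℤ) := by
    intro hEq
    apply hab
    have h2 : a ^ 2 = b ^ 2 := by rw [inorm_sq, inorm_sq, hEq]
    nlinarith
  have hone : (1 : ℝ) ≤ |a ^ 2 - b ^ 2| := by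
    rw [inorm_sq j, inorm_sq k, ← Int.cast_sub, ← Int.cast_abs]
    exact_mod_cast Int.one_le_abs (sub_ne_zero.mpr hsqne)
  rcases eq_or_lt_of_le ha with hA0 | hA0
  · -- a = 0 : the expression is zero
    rw [← hA0]
    norm_num
  -- a > 0, hence a² ≥ 1 (a² is a positive integer), hence a ≥ 1
  have ha2int : a ^ 2 = ((∑ i, (j i) ^ 2 : ℤ) : ℝ) := inorm_sq j
  have ha1 : 1 ≤ a := by
    have hposR : (0:ℝ) < ((∑ i, (j i) ^ 2 : ℤ) : ℝ) := by
      rw [← ha2int]; exact pow_pos hA0 2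
    have hposZ : (0 : ℤ) < (∑ i, (j i) ^ 2 : ℤ) := by exact_mod_cast hposR
    have h1 : (1 : ℤ) ≤ (∑ i, (j i) ^ 2 : ℤ) := hposZ
    nlinarith [ha2int, (by exact_mod_cast h1 : (1:ℝ) ≤ ((∑ i, (j i) ^ 2 : ℤ) : ℝ))]
  have habne : a - b ≠ 0 := sub_ne_zero.mpr hab
  have habpos : 0 < |a - b| := abs_pos.mpr habne
  -- key : 1 ≤ 3 * a * |a - b|
  have hkey : 1 ≤ 3 * a * |a - b| := by
    rcases le_or_gt b a with hba | hba
    · rw [abs_of_nonneg (by linarith)]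
      have : |a ^ 2 - b ^ 2| = (a - b) * (a + b) := by
        rw [abs_of_nonneg (by nlinarith)]; ring
      nlinarith
    · rw [abs_of_neg (by linarith)]
      have h2 : |a ^ 2 - b ^ 2| = (b - a) * (a + b) := by
        rw [abs_of_nonpos (by nlinarith)]; ring
      rcases le_or_gt b (2 * a) with hb2 | hb2
      · nlinarith
      · nlinarith
  have : |a ^ 2 / (8 * (a - b))| = a ^ 2 / (8 * |a - b|) := by
    rw [abs_div, abs_of_nonneg (sq_nonneg a), abs_mul, abs_of_nonneg (by norm_num : (0:ℝ) ≤ 8)]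
  rw [this, div_le_iff₀ (by positivity)]
  nlinarith [sq_nonneg a, mul_le_mul_of_nonneg_left hkey (sq_nonneg a)]

lemma rpow_three_halves_sq (x : ℝ) (hx : 0 ≤ x) :
    (x ^ ((3:ℝ)/2)) ^ 2 = x ^ (2 * ((3:ℝ)/2)) := by
  rw [← Real.rpow_natCast (x ^ ((3:ℝ)/2)) 2, ← Real.rpow_mul hx]
  norm_num

lemma rpow_three_halves_mul_self (x : ℝ) (hx : 0 ≤ x) :
    x ^ ((3:ℝ)/2) * x ^ ((3:ℝ)/2) = x ^ 3 := by
  have := rpow_three_halves_sq x hx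
  have h3 : x ^ (2 * ((3:ℝ)/2)) = x ^ (3:ℕ) := by
    rw [← Real.rpow_natCast x 3]; norm_num
  rw [← sq]
  rw [this, h3]

/-- Cauchy–Schwarz for tsums of nonnegative reals. -/
lemma tsum_cs {ι : Type*} (a b : ι → ℝ) (ha : ∀ i, 0 ≤ a i) (hb : ∀ i, 0 ≤ b i)
    (hA : Summable fun i => a i ^ 2) (hB : Summable fun i => b i ^ 2) :
    Summable (fun i => a i * b i) ∧
      ∑' i, a i * b i ≤ Real.sqrt (∑' i, a i ^ 2) * Real.sqrt (∑' i, b i ^ 2) := by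
  have hsum : Summable (fun i => a i * b i) := by
    refine Summable.of_nonneg_of_le (fun i => mul_nonneg (ha i) (hb i))
      (fun i => ?_) ((hA.add hB).div_const 2)
    nlinarith [sq_nonneg (a i - b i)]
  refine ⟨hsum, Summable.tsum_le_of_sum_le hsum fun t => ?_⟩
  have h1 : (∑ i ∈ t, a i * b i) ^ 2 ≤ (∑ i ∈ t, a i ^ 2) * (∑ i ∈ t, b i ^ 2) :=
    Finset.sum_mul_sq_le_sq_mul_sq t a b
  have h2 : (∑ i ∈ t, a i ^ 2) ≤ ∑' i, a i ^ 2 :=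
    Summable.sum_le_tsum t (fun i _ => sq_nonneg _) hA
  have h3 : (∑ i ∈ t, b i ^ 2) ≤ ∑' i, b i ^ 2 :=
    Summable.sum_le_tsum t (fun i _ => sq_nonneg _) hB
  have hsnn : 0 ≤ ∑ i ∈ t, a i * b i :=
    Finset.sum_nonneg fun i _ => mul_nonneg (ha i) (hb i)
  rw [← Real.sqrt_mul (tsum_nonneg fun i => sq_nonneg _)]
  rw [show (∑ i ∈ t, a i * b i) = Real.sqrt ((∑ i ∈ t, a i * b i) ^ 2) from
    (Real.sqrt_sq hsnn).symm]
  apply Real.sqrt_le_sqrt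
  calc (∑ i ∈ t, a i * b i) ^ 2 ≤ (∑ i ∈ t, a i ^ 2) * (∑ i ∈ t, b i ^ 2) := h1
    _ ≤ (∑' i, a i ^ 2) * (∑' i, b i ^ 2) := by
        apply mul_le_mul h2 h3 (Finset.sum_nonneg fun i _ => sq_nonneg _)
          (tsum_nonneg fun i => sq_nonneg _)

theorem stmt_14 {d : ℕ} (hd : 2 ≤ d) (s : ℝ) (hs : 0 ≤ s)
    (u v h : (Fin d → ℤ) → ℂ) (hu0 : u 0 = 0) (hv0 : v 0 = 0) (hh0 : h 0 = 0)
    (hu : Summable fun j => ‖u j‖ ^ 2 * inorm j ^ (2 * (3 / 2 : ℝ)))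
    (hv : Summable fun j => ‖v j‖ ^ 2 * inorm j ^ (2 * (3 / 2 : ℝ)))
    (hh : Summable fun j => ‖h j‖ ^ 2 * inorm j ^ (2 * s)) :
    sobNorm s (fun k => (∑' j, u j * v (-j) * (a12 j k : ℂ)) * h k)
      ≤ (3 / 8) * sobNorm (3 / 2) u * sobNorm (3 / 2) v * sobNorm s h := by
  set A : (Fin d → ℤ) → ℝ := fun j => ‖u j‖ * inorm j ^ ((3:ℝ)/2) with hA_def
  set B : (Fin d → ℤ) → ℝ := fun j => ‖v (-j)‖ * inorm j ^ ((3:ℝ)/2) with hB_def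
  have hAnn : ∀ j, 0 ≤ A j := fun j => mul_nonneg (norm_nonneg _) (Real.rpow_nonneg (inorm_nonneg _) _)
  have hBnn : ∀ j, 0 ≤ B j := fun j => mul_nonneg (norm_nonneg _) (Real.rpow_nonneg (inorm_nonneg _) _)
  have hAsq : ∀ j, A j ^ 2 = ‖u j‖ ^ 2 * inorm j ^ (2 * (3/2 : ℝ)) := by
    intro j
    rw [hA_def]
    rw [mul_pow, rpow_three_halves_sq _ (inorm_nonneg _)]
  have hBsq : ∀ j, B j ^ 2 = ‖v (-j)‖ ^ 2 * inorm (-j) ^ (2 * (3/2 : ℝ)) := by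
    intro j
    rw [hB_def]
    rw [mul_pow, rpow_three_halves_sq _ (inorm_nonneg _), inorm_neg]
  have hA_summ : Summable fun j => A j ^ 2 := by
    simp_rw [hAsq]; exact hu
  have hB_summ : Summable fun j => B j ^ 2 := by
    simp_rw [hBsq]
    exact ((Equiv.neg (Fin d → ℤ)).summable_iff).mpr hv
  obtain ⟨hAB_summ, hAB_le⟩ := tsum_cs A B hAnn hBnn hA_summ hB_summ
  have hAtsum : Real.sqrt (∑' j, A j ^ 2) = sobNorm (3/2) u := by
    unfold sobNorm
    congr 1
    exact tsum_congr hAsq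
  have hBtsum : Real.sqrt (∑' j, B j ^ 2) = sobNorm (3/2) v := by
    unfold sobNorm
    congr 1
    calc ∑' j, B j ^ 2
        = ∑' j, (fun i => ‖v i‖ ^ 2 * inorm i ^ (2 * (3/2 : ℝ))) ((Equiv.neg (Fin d → ℤ)) j) := by
          refine tsum_congr fun j => ?_
          simp only [Equiv.neg_apply]
          exact hBsq j
      _ = ∑' j, ‖v j‖ ^ 2 * inorm j ^ (2 * (3/2 : ℝ)) := by
          exact (Equiv.neg (Fin d → ℤ)).tsum_eq
            (fun i => ‖v i‖ ^ 2 * inorm i ^ (2 * (3/2 : ℝ)))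
  set K : ℝ := 3 / 8 * sobNorm (3/2) u * sobNorm (3/2) v with hK_def
  have hK0 : 0 ≤ K := by
    rw [hK_def]
    have := Real.sqrt_nonneg (∑' j, ‖u j‖ ^ 2 * inorm j ^ (2 * (3/2 : ℝ)))
    unfold sobNorm
    positivity
  -- pointwise bound on the scalar factor
  have hscalar : ∀ k, ‖∑' j, u j * v (-j) * (a12 j k : ℂ)‖ ≤ K := by
    intro k
    have hterm : ∀ j, ‖u j * v (-j) * (a12 j k : ℂ)‖ ≤ 3 / 8 * (A j * B j) := by
      intro j
      rw [norm_mul, norm_mul, Complex.norm_real, Real.norm_eq_abs]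
      have h1 : A j * B j = ‖u j‖ * ‖v (-j)‖ * inorm j ^ 3 := by
        simp only [hA_def, hB_def]
        rw [mul_mul_mul_comm, rpow_three_halves_mul_self _ (inorm_nonneg j)]
      rw [h1]
      have h2 := a12_abs_le j k
      have h3 : 0 ≤ ‖u j‖ * ‖v (-j)‖ := mul_nonneg (norm_nonneg _) (norm_nonneg _)
      calc ‖u j‖ * ‖v (-j)‖ * |a12 j k| ≤ ‖u j‖ * ‖v (-j)‖ * (3 / 8 * inorm j ^ 3) :=
            mul_le_mul_of_nonneg_left h2 h3
        _ = 3 / 8 * (‖u j‖ * ‖v (-j)‖ * inorm j ^ 3) := by ring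
    have hnorm_summ : Summable fun j => ‖u j * v (-j) * (a12 j k : ℂ)‖ := by
      refine Summable.of_nonneg_of_le (fun j => norm_nonneg _) hterm ?_
      exact hAB_summ.mul_left _
    calc ‖∑' j, u j * v (-j) * (a12 j k : ℂ)‖
        ≤ ∑' j, ‖u j * v (-j) * (a12 j k : ℂ)‖ := norm_tsum_le_tsum_norm hnorm_summ
      _ ≤ ∑' j, 3 / 8 * (A j * B j) := Summable.tsum_le_tsum hterm hnorm_summ (hAB_summ.mul_left _)
      _ = 3 / 8 * ∑' j, A j * B j := tsum_mul_left
      _ ≤ 3 / 8 * (Real.sqrt (∑' j, A j ^ 2) * Real.sqrt (∑' j, B j ^ 2)) := by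
          apply mul_le_mul_of_nonneg_left hAB_le; norm_num
      _ = K := by rw [hAtsum, hBtsum, hK_def]; ring
  -- assemble
  unfold sobNorm
  have hle : ∀ k, ‖(∑' j, u j * v (-j) * (a12 j k : ℂ)) * h k‖ ^ 2 * inorm k ^ (2 * s)
      ≤ K ^ 2 * (‖h k‖ ^ 2 * inorm k ^ (2 * s)) := by
    intro k
    have hw : 0 ≤ inorm k ^ (2 * s) := Real.rpow_nonneg (inorm_nonneg _) _
    rw [norm_mul, mul_pow]
    have h1 : ‖∑' j, u j * v (-j) * (a12 j k : ℂ)‖ ^ 2 ≤ K ^ 2 := by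
      have := hscalar k
      nlinarith [norm_nonneg (∑' j, u j * v (-j) * (a12 j k : ℂ))]
    nlinarith [mul_le_mul_of_nonneg_right h1 (mul_nonneg (sq_nonneg ‖h k‖) hw)]
  have hsum1 : (∑' k, ‖(∑' j, u j * v (-j) * (a12 j k : ℂ)) * h k‖ ^ 2 * inorm k ^ (2 * s))
      ≤ ∑' k, K ^ 2 * (‖h k‖ ^ 2 * inorm k ^ (2 * s)) := by
    apply Summable.tsum_le_tsum hle _ (hh.mul_left _)
    refine Summable.of_nonneg_of_le (fun k => ?_) hle (hh.mul_left _)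
    exact mul_nonneg (sq_nonneg _) (Real.rpow_nonneg (inorm_nonneg _) _)
  calc Real.sqrt (∑' k, ‖(∑' j, u j * v (-j) * (a12 j k : ℂ)) * h k‖ ^ 2 * inorm k ^ (2 * s))
      ≤ Real.sqrt (∑' k, K ^ 2 * (‖h k‖ ^ 2 * inorm k ^ (2 * s))) := Real.sqrt_le_sqrt hsum1
    _ = K * Real.sqrt (∑' k, ‖h k‖ ^ 2 * inorm k ^ (2 * s)) := by
        rw [tsum_mul_left, Real.sqrt_mul (sq_nonneg K), Real.sqrt_sq hK0]
    _ = 3 / 8 * sobNorm (3/2) u * sobNorm (3/2) v * sobNorm s h := by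
        rw [hK_def]; unfold sobNorm; ring
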